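/- Let C be a k-dimensional linear code over a finite field F_q with q elements, and suppose that for some 1 ≤ i < k the generalized Hamming weights satisfy q^{k−i}(q^i − 1) · d_k = (q^k − 1) · d_i. Then C is a constant weight code, of weight d where d · (q^k − 1) = d_k · q^{k−1}(q − 1). -/

import Mathlib

open Module Finset
open scoped Classical

section Aux

variable {F : Type*} [Field F]

/-- The number of subspaces of a given dimension. -/
noncomputable def nSub (F : Type*) [Field F] (W : Type*) [AddCommGroup W] [Module F W]
    (j : ℕ) : ℕ :=
  Nat.card {E : Submodule F W // Module.finrank F E = j}

variable {W W' : Type*} [AddCommGroup W] [Module F W] [AddCommGroup W'] [Module F W']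

lemma submoduleFinite [Finite W] : Finite (Submodule F W) :=
  Finite.of_injective (fun E => (E : Set W)) SetLike.coe_injective

lemma natCard_eq_filter {α : Type*} [Fintype α] (p : α → Prop) [DecidablePred p] :
    Nat.card {x // p x} = (univ.filter p).card := by
  rw [Nat.card_eq_fintype_card, Fintype.card_subtype]

lemma nSub_congr (e : W ≃ₗ[F] W') (j : ℕ) : nSub F W j = nSub F W' j := by
  apply Nat.card_congr
  refine Equiv.subtypeEquiv (Submodule.orderIsoMapComap e).toEquiv fun E => ?_
  have : (Submodule.orderIsoMapComap e).toEquiv E = Submodule.map (e : W →ₗ[F] W') E := rfl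
  rw [this]
  exact (iff_of_eq (congrArg (· = j) (e.finrank_map_eq E))).symm

lemma nSub_congr' [FiniteDimensional F W] [FiniteDimensional F W']
    (h : finrank F W = finrank F W') (j : ℕ) : nSub F W j = nSub F W' j :=
  nSub_congr (FiniteDimensional.nonempty_linearEquiv_of_finrank_eq h).some j

lemma nSub_pos [FiniteDimensional F W] [Finite W] {j : ℕ} (hj : j ≤ finrank F W) :
    0 < nSub F W j := by
  haveI : Finite (Submodule F W) := submoduleFinite
  rw [nSub, Nat.card_pos_iff]
  refine ⟨?_, inferInstance⟩
  obtain ⟨f, hf⟩ := exists_linearIndependent_of_le_finrank hj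
  exact ⟨⟨Submodule.span F (Set.range f), by rw [finrank_span_eq_card hf]; simp⟩⟩

lemma finrank_eq_finrank_map_mkQ_add [FiniteDimensional F W] (p E : Submodule F W)
    (h : p ≤ E) :
    finrank F E = finrank F (E.map p.mkQ) + finrank F p := by
  have h1 := LinearMap.finrank_range_add_finrank_ker (p.mkQ.comp E.subtype)
  rw [LinearMap.range_comp, Submodule.range_subtype, LinearMap.ker_comp,
    Submodule.ker_mkQ] at h1
  rw [← h1]
  congr 1
  exact (Submodule.comapSubtypeEquivOfLe h).finrank_eq


lemma card_subs_of_quotient [FiniteDimensional F W] (p : Submodule F W) (j : ℕ) :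
    Nat.card {E : Submodule F W // p ≤ E ∧ finrank F E = j + finrank F p}
      = nSub F (W ⧸ p) j := by
  rw [nSub]
  symm
  apply Nat.card_congr
  have hker : ∀ E' : Submodule F (W ⧸ p), p ≤ Submodule.comap p.mkQ E' := by
    intro E' x hx
    simp only [Submodule.mem_comap, Submodule.mkQ_apply]
    rw [Submodule.Quotient.mk_eq_zero p |>.2 hx]
    exact E'.zero_mem
  have hmc : ∀ E' : Submodule F (W ⧸ p),
      Submodule.map p.mkQ (Submodule.comap p.mkQ E') = E' := fun E' =>
    Submodule.map_comap_eq_of_surjective p.mkQ_surjective E'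
  have hfr : ∀ E' : Submodule F (W ⧸ p),
      finrank F (Submodule.comap p.mkQ E') = finrank F E' + finrank F p := by
    intro E'
    have := finrank_eq_finrank_map_mkQ_add p (Submodule.comap p.mkQ E') (hker E')
    rwa [hmc E'] at this
  refine ⟨fun E' => ⟨Submodule.comap p.mkQ E'.1, hker E'.1, by rw [hfr E'.1, E'.2]⟩,
    fun E => ⟨Submodule.map p.mkQ E.1, ?_⟩, fun E' => ?_, fun E => ?_⟩
  · have := finrank_eq_finrank_map_mkQ_add p E.1 E.2.1
    rw [E.2.2] at this
    omega
  · exact Subtype.ext (hmc E'.1)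
  · refine Subtype.ext ?_
    simp only
    rw [Submodule.comap_map_eq, Submodule.ker_mkQ, sup_eq_left.2 E.2.1]

lemma card_le_and_finrank (A : Submodule F W) (j : ℕ) :
    Nat.card {E : Submodule F W // E ≤ A ∧ finrank F E = j} = nSub F A j := by
  rw [nSub]
  symm
  apply Nat.card_congr
  have hmc : ∀ E' : Submodule F A, Submodule.comap A.subtype (Submodule.map A.subtype E') = E' := by
    intro E'
    rw [Submodule.comap_map_eq, Submodule.ker_subtype, sup_bot_eq]
  have hcm : ∀ E : Submodule F W, E ≤ A →
      Submodule.map A.subtype (Submodule.comap A.subtype E) = E := by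
    intro E hE
    rw [Submodule.map_comap_subtype, inf_eq_right.2 hE]
  refine ⟨fun E' => ⟨Submodule.map A.subtype E'.1, Submodule.map_subtype_le A E'.1,
      by rw [Submodule.finrank_map_subtype_eq]; exact E'.2⟩,
    fun E => ⟨Submodule.comap A.subtype E.1, ?_⟩, fun E' => Subtype.ext (hmc E'.1),
    fun E => Subtype.ext (hcm E.1 E.2.1)⟩
  · have : finrank F (Submodule.map A.subtype (Submodule.comap A.subtype E.1)) = j := by
      rw [hcm E.1 E.2.1]; exact E.2.2
    rw [Submodule.finrank_map_subtype_eq] at this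
    exact this


lemma finrank_comap_subtype (A : Submodule F W) {E : Submodule F W} (hE : E ≤ A) :
    finrank F (Submodule.comap A.subtype E) = finrank F E := by
  rw [← Submodule.finrank_map_subtype_eq, Submodule.map_comap_subtype, inf_eq_right.2 hE]

lemma card_line [FiniteDimensional F W] (A : Submodule F W) {v : W} (hvA : v ∈ A)
    (hv : v ≠ 0) {j : ℕ} (hj : 1 ≤ j) :
    Nat.card {E : Submodule F W // E ≤ A ∧ v ∈ E ∧ finrank F E = j}
      = nSub F (↥A ⧸ Submodule.span F {(⟨v, hvA⟩ : A)}) (j - 1) := by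
  set vb : ↥A := ⟨v, hvA⟩ with hvbdef
  have hvb : vb ≠ 0 := fun h => hv (congrArg Subtype.val h)
  have hfrs : finrank F (Submodule.span F {vb}) = 1 := finrank_span_singleton hvb
  rw [← card_subs_of_quotient (Submodule.span F {vb}) (j - 1)]
  apply Nat.card_congr
  have hmc : ∀ E' : Submodule F A,
      Submodule.comap A.subtype (Submodule.map A.subtype E') = E' := by
    intro E'
    rw [Submodule.comap_map_eq, Submodule.ker_subtype, sup_bot_eq]
  have hcm : ∀ E : Submodule F W, E ≤ A →
      Submodule.map A.subtype (Submodule.comap A.subtype E) = E := by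
    intro E hE
    rw [Submodule.map_comap_subtype, inf_eq_right.2 hE]
  refine ⟨fun E => ⟨Submodule.comap A.subtype E.1, ?_, ?_⟩,
    fun E' => ⟨Submodule.map A.subtype E'.1, Submodule.map_subtype_le A E'.1, ?_, ?_⟩,
    fun E => Subtype.ext (hcm E.1 E.2.1), fun E' => Subtype.ext (hmc E'.1)⟩
  · rw [Submodule.span_singleton_le_iff_mem]
    exact E.2.2.1
  · rw [finrank_comap_subtype A E.2.1, E.2.2.2, hfrs]
    omega
  · exact Submodule.mem_map.2 ⟨vb, (Submodule.span_singleton_le_iff_mem vb E'.1).1 E'.2.1, rfl⟩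
  · rw [Submodule.finrank_map_subtype_eq]
    have := E'.2.2
    omega

lemma card_line_fun [FiniteDimensional F W] (A : Submodule F W) {v : W} (hvA : v ∈ A)
    (hv : v ≠ 0) {j m : ℕ} (hj : 1 ≤ j) (hm : finrank F A = m + 1) :
    Nat.card {E : Submodule F W // E ≤ A ∧ v ∈ E ∧ finrank F E = j}
      = nSub F (Fin m → F) (j - 1) := by
  rw [card_line A hvA hv hj]
  apply nSub_congr'
  have h2 := Submodule.finrank_quotient_add_finrank (Submodule.span F {(⟨v, hvA⟩ : A)})
  rw [finrank_span_singleton (fun h => hv (congrArg Subtype.val h))] at h2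
  have h3 : finrank F (Fin m → F) = m := by
    rw [Module.finrank_pi]; simp
  omega


lemma card_filter_mem (A : Submodule F W) [Fintype F] [Fintype W] :
    (univ.filter fun v : W => v ∈ A).card = Fintype.card F ^ finrank F A := by
  classical
  rw [← Fintype.card_subtype, ← card_eq_pow_finrank (K := F) (V := ↥A)]

lemma card_mem_diff [Fintype F] [Fintype W] (A B : Submodule F W) (hBA : B ≤ A)
    (hrk : finrank F B + 1 = finrank F A) :
    (univ.filter fun v : W => v ∈ A ∧ v ∉ B).card
      = Fintype.card F ^ finrank F B * (Fintype.card F - 1) := by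
  classical
  have h1 : ((univ.filter fun v : W => v ∈ A).filter fun v => v ∈ B).card
      + ((univ.filter fun v : W => v ∈ A).filter fun v => ¬ v ∈ B).card
      = (univ.filter fun v : W => v ∈ A).card :=
    Finset.card_filter_add_card_filter_not _
  rw [Finset.filter_filter, Finset.filter_filter] at h1
  have h2 : (univ.filter fun v : W => v ∈ A ∧ v ∈ B) = univ.filter fun v : W => v ∈ B := by
    apply Finset.filter_congr
    intro v _
    exact and_iff_right_of_imp fun hv => hBA hv
  rw [h2, card_filter_mem, card_filter_mem] at h1
  have h3 : Fintype.card F ^ finrank F A = Fintype.card F ^ finrank F B * Fintype.card F := by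
    rw [← pow_succ, hrk]
  have h4 : Fintype.card F ^ finrank F B * (Fintype.card F - 1) + Fintype.card F ^ finrank F B
      = Fintype.card F ^ finrank F B * Fintype.card F := by
    rw [← Nat.mul_succ]
    congr 1
    have : 0 < Fintype.card F := Fintype.card_pos
    omega
  omega

lemma card_nonzero [Fintype F] [Fintype W] (A : Submodule F W) :
    (univ.filter fun v : W => v ∈ A ∧ v ≠ 0).card = Fintype.card F ^ finrank F A - 1 := by
  classical
  have h1 : ((univ.filter fun v : W => v ∈ A).filter fun v => v = 0).card
      + ((univ.filter fun v : W => v ∈ A).filter fun v => ¬ v = 0).card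
      = (univ.filter fun v : W => v ∈ A).card :=
    Finset.card_filter_add_card_filter_not _
  rw [Finset.filter_filter, Finset.filter_filter] at h1
  have h2 : (univ.filter fun v : W => v ∈ A ∧ v = 0) = {0} := by
    ext v
    simp only [Finset.mem_filter, Finset.mem_univ, true_and, Finset.mem_singleton]
    exact ⟨fun h => h.2, fun h => ⟨h ▸ A.zero_mem, h⟩⟩
  rw [h2, card_filter_mem] at h1
  simp only [Finset.card_singleton] at h1
  simp only [ne_eq]
  omega


lemma card_mem_diff' [Fintype F] [Fintype W] (A B : Submodule F W) (hBA : B ≤ A)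
    (hrk : finrank F B + 1 = finrank F A) :
    Nat.card {v : W // v ∈ A ∧ v ∉ B}
      = Fintype.card F ^ finrank F B * (Fintype.card F - 1) := by
  rw [natCard_eq_filter]
  exact card_mem_diff A B hBA hrk

lemma card_nonzero' [Fintype F] [Fintype W] (A : Submodule F W) :
    Nat.card {v : W // v ∈ A ∧ v ≠ 0} = Fintype.card F ^ finrank F A - 1 := by
  rw [natCard_eq_filter]
  exact card_nonzero A

lemma sup_span_props [FiniteDimensional F W] {B D : Submodule F W} {A : Submodule F W}
    {v : W} {j : ℕ} (hj : 1 ≤ j) (hBA : B ≤ A) (hD : D ≤ B) (hDj : finrank F D = j - 1)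
    (hvA : v ∈ A) (hvB : v ∉ B) :
    D ⊔ Submodule.span F {v} ≤ A ∧ finrank F (D ⊔ Submodule.span F {v} : Submodule F W) = j ∧
      ¬ D ⊔ Submodule.span F {v} ≤ B := by
  have hv0 : v ≠ 0 := fun h => hvB (h ▸ B.zero_mem)
  have hvmem : v ∈ D ⊔ Submodule.span F {v} :=
    (le_sup_right : Submodule.span F {v} ≤ _) (Submodule.mem_span_singleton_self v)
  refine ⟨sup_le (hD.trans hBA) ((Submodule.span_singleton_le_iff_mem v A).2 hvA), ?_,
    fun hle => hvB (hle hvmem)⟩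
  have hdisj : D ⊓ Submodule.span F {v} = ⊥ := by
    rw [eq_bot_iff]
    rintro x ⟨hxD, hxs⟩
    obtain ⟨a, rfl⟩ := Submodule.mem_span_singleton.1 hxs
    by_cases ha : a = 0
    · simp [ha]
    · exact absurd (hD (by simpa [ha] using D.smul_mem a⁻¹ hxD)) hvB
  have h := Submodule.finrank_sup_add_finrank_inf_eq D (Submodule.span F {v})
  rw [hdisj, finrank_bot, finrank_span_singleton hv0, hDj] at h
  omega

lemma inf_hyperplane_rank [FiniteDimensional F W] {A B E : Submodule F W} (hBA : B ≤ A)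
    (hrk : finrank F B + 1 = finrank F A) (hEA : E ≤ A) (hEB : ¬ E ≤ B) :
    finrank F (E ⊓ B : Submodule F W) + 1 = finrank F E := by
  have hlt : B < E ⊔ B := lt_of_le_of_ne le_sup_right
    (fun h => hEB (le_sup_left.trans_eq h.symm))
  have h1 : finrank F B < finrank F (E ⊔ B : Submodule F W) :=
    Submodule.finrank_lt_finrank_of_lt hlt
  have h2 : finrank F (E ⊔ B : Submodule F W) ≤ finrank F A :=
    Submodule.finrank_mono (sup_le hEA hBA)
  have h3 := Submodule.finrank_sup_add_finrank_inf_eq E B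
  omega

lemma hyperplane_count [Fintype F] [Fintype W] [FiniteDimensional F W]
    [Fintype (Submodule F W)] (A B : Submodule F W) (hBA : B ≤ A)
    (hrk : finrank F B + 1 = finrank F A) {j : ℕ} (hj : 1 ≤ j) :
    (univ.filter fun E : Submodule F W => E ≤ A ∧ finrank F E = j ∧ ¬ E ≤ B).card
        * (Fintype.card F ^ (j - 1) * (Fintype.card F - 1))
      = (univ.filter fun D : Submodule F W => D ≤ B ∧ finrank F D = j - 1).card
        * (Fintype.card F ^ finrank F B * (Fintype.card F - 1)) := by
  classical
  set q := Fintype.card F with hqdef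
  have hmaps : ∀ Dv ∈ (univ.filter fun Dv : Submodule F W × W =>
      Dv.1 ≤ B ∧ finrank F Dv.1 = j - 1 ∧ Dv.2 ∈ A ∧ Dv.2 ∉ B),
      (Dv.1 ⊔ Submodule.span F {Dv.2}) ∈ (univ.filter fun E : Submodule F W =>
        E ≤ A ∧ finrank F E = j ∧ ¬ E ≤ B) := by
    intro Dv hDv
    obtain ⟨hD, hDj, hvA, hvB⟩ := (mem_filter.1 hDv).2
    obtain ⟨h1, h2, h3⟩ := sup_span_props hj hBA hD hDj hvA hvB
    exact mem_filter.2 ⟨mem_univ _, h1, h2, h3⟩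
  have hcard := Finset.card_eq_sum_card_fiberwise hmaps
  have hfib : ∀ E ∈ (univ.filter fun E : Submodule F W =>
      E ≤ A ∧ finrank F E = j ∧ ¬ E ≤ B),
      ((univ.filter fun Dv : Submodule F W × W =>
        Dv.1 ≤ B ∧ finrank F Dv.1 = j - 1 ∧ Dv.2 ∈ A ∧ Dv.2 ∉ B).filter
        fun Dv => Dv.1 ⊔ Submodule.span F {Dv.2} = E).card = q ^ (j - 1) * (q - 1) := by
    intro E hE
    obtain ⟨hEA, hEj, hEB⟩ := (mem_filter.1 hE).2
    have hinf : finrank F (E ⊓ B : Submodule F W) + 1 = j := by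
      have := inf_hyperplane_rank hBA hrk hEA hEB
      omega
    have hkey : ∀ Dv ∈ ((univ.filter fun Dv : Submodule F W × W =>
        Dv.1 ≤ B ∧ finrank F Dv.1 = j - 1 ∧ Dv.2 ∈ A ∧ Dv.2 ∉ B).filter
        fun Dv => Dv.1 ⊔ Submodule.span F {Dv.2} = E), Dv.1 = E ⊓ B := by
      intro Dv hDv
      obtain ⟨hmem, hsup⟩ := mem_filter.1 hDv
      obtain ⟨hD, hDj, hvA, hvB⟩ := (mem_filter.1 hmem).2
      have hDE : Dv.1 ≤ E := le_sup_left.trans_eq hsup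
      exact Submodule.eq_of_le_of_finrank_le (le_inf hDE hD) (by omega)
    have hbij : ((univ.filter fun Dv : Submodule F W × W =>
        Dv.1 ≤ B ∧ finrank F Dv.1 = j - 1 ∧ Dv.2 ∈ A ∧ Dv.2 ∉ B).filter
        fun Dv => Dv.1 ⊔ Submodule.span F {Dv.2} = E).card
        = (univ.filter fun v : W => v ∈ E ∧ v ∉ (E ⊓ B : Submodule F W)).card := by
      apply Finset.card_bij (fun Dv _ => Dv.2)
      · intro a ha
        obtain ⟨hmem, hsup⟩ := mem_filter.1 ha
        obtain ⟨hD, hDj, hvA, hvB⟩ := (mem_filter.1 hmem).2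
        have hvE : a.2 ∈ E := hsup ▸
          (le_sup_right : Submodule.span F {a.2} ≤ _) (Submodule.mem_span_singleton_self a.2)
        exact mem_filter.2 ⟨mem_univ _, hvE, fun hm => hvB hm.2⟩
      · intro a ha b hb hab
        have h1 := hkey a ha
        have h2 := hkey b hb
        exact Prod.ext (h1.trans h2.symm) hab
      · intro v hv
        obtain ⟨hvE, hvEB⟩ := (mem_filter.1 hv).2
        have hvB : v ∉ B := fun h => hvEB ⟨hvE, h⟩
        have hsmem : (E ⊓ B, v) ∈ (univ.filter fun Dv : Submodule F W × W =>
            Dv.1 ≤ B ∧ finrank F Dv.1 = j - 1 ∧ Dv.2 ∈ A ∧ Dv.2 ∉ B) :=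
          mem_filter.2 ⟨mem_univ _, inf_le_right,
            (show finrank F (E ⊓ B : Submodule F W) = j - 1 by omega), hEA hvE, hvB⟩
        have hsup : (E ⊓ B : Submodule F W) ⊔ Submodule.span F {v} = E := by
          obtain ⟨-, h2, -⟩ := sup_span_props hj hBA (inf_le_right (a := E))
            (by omega : finrank F (E ⊓ B : Submodule F W) = j - 1) (hEA hvE) hvB
          refine Submodule.eq_of_le_of_finrank_le
            (sup_le inf_le_left ((Submodule.span_singleton_le_iff_mem v E).2 hvE)) (by omega)
        exact ⟨(E ⊓ B, v), mem_filter.2 ⟨hsmem, hsup⟩, rfl⟩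
    rw [hbij]
    have htarget := card_mem_diff E (E ⊓ B) inf_le_left (by omega)
    rw [htarget]
    congr 2
    omega
  have hsum := Finset.sum_const_nat hfib
  rw [hsum] at hcard
  have hprod : (univ.filter fun Dv : Submodule F W × W =>
      Dv.1 ≤ B ∧ finrank F Dv.1 = j - 1 ∧ Dv.2 ∈ A ∧ Dv.2 ∉ B).card
      = (univ.filter fun D : Submodule F W => D ≤ B ∧ finrank F D = j - 1).card
        * (q ^ finrank F B * (q - 1)) := by
    have hs : (univ.filter fun Dv : Submodule F W × W =>
        Dv.1 ≤ B ∧ finrank F Dv.1 = j - 1 ∧ Dv.2 ∈ A ∧ Dv.2 ∉ B)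
        = (univ.filter fun D : Submodule F W => D ≤ B ∧ finrank F D = j - 1) ×ˢ
          (univ.filter fun v : W => v ∈ A ∧ v ∉ B) := by
      ext Dv
      simp only [mem_filter, mem_product, mem_univ, true_and, and_assoc]
    rw [hs, Finset.card_product, card_mem_diff A B hBA hrk]
  rw [hprod] at hcard
  exact hcard.symm

lemma hyperplane_count' [Fintype F] [Fintype W] [FiniteDimensional F W]
    [Fintype (Submodule F W)] (A B : Submodule F W) (hBA : B ≤ A)
    (hrk : finrank F B + 1 = finrank F A) {j : ℕ} (hj : 1 ≤ j) :
    Nat.card {E : Submodule F W // E ≤ A ∧ finrank F E = j ∧ ¬ E ≤ B}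
        * (Fintype.card F ^ (j - 1) * (Fintype.card F - 1))
      = Nat.card {D : Submodule F W // D ≤ B ∧ finrank F D = j - 1}
        * (Fintype.card F ^ finrank F B * (Fintype.card F - 1)) := by
  rw [natCard_eq_filter, natCard_eq_filter]
  exact hyperplane_count A B hBA hrk hj


end Aux

/-- The support of a subcode `D` of `F_q^n`. -/
def codeSupp {F : Type*} [Field F] {n : ℕ} (D : Submodule F (Fin n → F)) : Set (Fin n) :=
  {x | ∃ d ∈ D, d x ≠ 0}

/-- The weight of a subcode: the cardinality of its support. -/
noncomputable def codeWt {F : Type*} [Field F] {n : ℕ} (D : Submodule F (Fin n → F)) : ℕ :=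
  (codeSupp D).ncard

/-- The `i`-th generalized Hamming weight of a code `C`. -/
noncomputable def dGHW {F : Type*} [Field F] {n : ℕ} (C : Submodule F (Fin n → F)) (i : ℕ) : ℕ :=
  sInf {m | ∃ D : Submodule F (Fin n → F), D ≤ C ∧ Module.finrank F D = i ∧ codeWt D = m}

/-- If for some `1 ≤ i < k` we have `q^(k-i) * (q^i - 1) * d_k = (q^k - 1) * d_i`, then `C`
is a constant weight code, of weight `d` where `d * (q^k - 1) = d_k * q^(k-1) * (q-1)`. -/
theorem constant_weight_of_dk_di_relation
    {F : Type*} [Field F] [Fintype F] {n k q i : ℕ} (hq : Fintype.card F = q)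
    (C : Submodule F (Fin n → F)) (hk : Module.finrank F C = k)
    (hi1 : 1 ≤ i) (hik : i < k)
    (hrel : q ^ (k - i) * (q ^ i - 1) * dGHW C k = (q ^ k - 1) * dGHW C i) :
    ∃ d : ℕ, (∀ c ∈ C, c ≠ 0 → ({x | c x ≠ 0} : Set (Fin n)).ncard = d) ∧
      d * (q ^ k - 1) = dGHW C k * (q ^ (k - 1) * (q - 1)) := by
  classical
  subst hq
  haveI : Finite (Submodule F (Fin n → F)) := submoduleFinite
  haveI : Fintype (Submodule F (Fin n → F)) := Fintype.ofFinite _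
  have hq2 : 2 ≤ Fintype.card F := Fintype.one_lt_card
  have hk2 : 2 ≤ k := by omega
  have hQk : Fintype.card F ≤ Fintype.card F ^ k := Nat.le_self_pow (by omega) _
  have hwt : ∀ E : Submodule F (Fin n → F),
      codeWt E = (univ.filter fun x : Fin n => x ∈ codeSupp E).card := by
    intro E
    rw [codeWt, ← Nat.card_coe_set_eq]
    exact natCard_eq_filter _
  have hsuppmono : ∀ {D E : Submodule F (Fin n → F)}, D ≤ E → codeSupp D ⊆ codeSupp E := by
    rintro D E h x ⟨dd, hd, hdx⟩
    exact ⟨dd, h hd, hdx⟩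
  -- hyperplanes
  set Hx : Fin n → Submodule F (Fin n → F) :=
    fun x => LinearMap.ker (LinearMap.proj x) with hHxdef
  have hmemHx : ∀ (v : Fin n → F) (x : Fin n), v ∈ Hx x ↔ v x = 0 := by
    intro v x
    rw [hHxdef]
    exact LinearMap.mem_ker
  have hHx : ∀ (E : Submodule F (Fin n → F)) (x : Fin n),
      x ∈ codeSupp E ↔ ¬ E ≤ Hx x := by
    intro E x
    constructor
    · rintro ⟨dd, hd, hdx⟩ hle
      exact hdx ((hmemHx dd x).1 (hle hd))
    · intro h
      by_contra hx
      apply h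
      intro dd hd
      rw [hmemHx]
      by_contra hdx
      exact hx ⟨dd, hd, hdx⟩
  -- d_k = codeWt C
  have hdk_eq : dGHW C k = codeWt C := by
    have hset : {m | ∃ D : Submodule F (Fin n → F),
        D ≤ C ∧ finrank F D = k ∧ codeWt D = m} = {codeWt C} := by
      ext m
      simp only [Set.mem_setOf_eq, Set.mem_singleton_iff]
      constructor
      · rintro ⟨D, hDC, hDk, rfl⟩
        have hDeq : D = C := Submodule.eq_of_le_of_finrank_le hDC (by rw [hk, hDk])
        rw [hDeq]
      · rintro rfl
        exact ⟨C, le_rfl, hk, rfl⟩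
    rw [dGHW, hset, csInf_singleton]
  set dk := dGHW C k with hdkdef
  set di := dGHW C i with hdidef
  have hCwt : codeWt C = dk := hdk_eq.symm
  have hdi_le : ∀ E : Submodule F (Fin n → F), E ≤ C → finrank F E = i → di ≤ codeWt E :=
    fun E h1 h2 => Nat.sInf_le ⟨E, h1, h2, rfl⟩
  set supC := univ.filter (fun x : Fin n => x ∈ codeSupp C) with hsupCdef
  have hsupC_card : supC.card = dk := by
    rw [hsupCdef, ← hwt C, hCwt]
  -- rank of C ⊓ Hx x
  have hrkCHx : ∀ x ∈ supC, finrank F (C ⊓ Hx x : Submodule F (Fin n → F)) + 1 = k := by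
    intro x hx
    obtain ⟨c0, hc0C, hc0x⟩ : ∃ c ∈ C, c x ≠ 0 := (mem_filter.1 hx).2
    have hrange : LinearMap.range
        ((LinearMap.proj x : (Fin n → F) →ₗ[F] F).comp C.subtype) = ⊤ := by
      rw [LinearMap.range_eq_top]
      intro a
      refine ⟨⟨(a * (c0 x)⁻¹) • c0, C.smul_mem _ hc0C⟩, ?_⟩
      show (a * (c0 x)⁻¹) * c0 x = a
      field_simp
    have h1 := LinearMap.finrank_range_add_finrank_ker
      ((LinearMap.proj x : (Fin n → F) →ₗ[F] F).comp C.subtype)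
    rw [hrange, finrank_top, Module.finrank_self, LinearMap.ker_comp, hk] at h1
    have h2 : finrank F (C ⊓ Hx x : Submodule F (Fin n → F))
        = finrank F (Submodule.comap C.subtype (Hx x)) := by
      conv_lhs => rw [← Submodule.map_comap_subtype C (Hx x)]
      exact Submodule.finrank_map_subtype_eq C _
    have h2' : Hx x = LinearMap.ker (LinearMap.proj x : (Fin n → F) →ₗ[F] F) := rfl
    rw [h2'] at h2 ⊢
    omega
  -- the two auxiliary subspace-count constants
  set NN := nSub F (Fin (k-1) → F) (i-1) with hNNdef
  set PP := nSub F (Fin (k-2) → F) (i-1) with hPPdef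
  have hfrfun : ∀ m : ℕ, finrank F (Fin m → F) = m := fun m => by
    rw [Module.finrank_pi]; simp
  have hPPpos : 0 < PP := by
    rw [hPPdef]
    exact nSub_pos (by rw [hfrfun]; omega)
  set S := univ.filter (fun E : Submodule F (Fin n → F) => E ≤ C ∧ finrank F E = i)
    with hSdef
  -- double counting of weights
  have hdouble : ∀ T : Finset (Submodule F (Fin n → F)), (∀ E ∈ T, E ≤ C) →
      ∑ E ∈ T, codeWt E = ∑ x ∈ supC, (T.filter fun E => ¬ E ≤ Hx x).card := by
    intro T hT
    calc ∑ E ∈ T, codeWt E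
        = ∑ E ∈ T, ∑ x : Fin n, if x ∈ codeSupp E then 1 else 0 := by
          refine Finset.sum_congr rfl fun E _ => ?_
          rw [hwt E, Finset.card_filter]
      _ = ∑ x : Fin n, ∑ E ∈ T, if x ∈ codeSupp E then 1 else 0 := Finset.sum_comm
      _ = ∑ x ∈ supC, ∑ E ∈ T, if x ∈ codeSupp E then 1 else 0 := by
          symm
          apply Finset.sum_subset (subset_univ _)
          intro x _ hx
          refine Finset.sum_eq_zero fun E hE => ?_
          rw [if_neg]
          intro hxE
          exact hx (mem_filter.2 ⟨mem_univ _, hsuppmono (hT E hE) hxE⟩)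
      _ = ∑ x ∈ supC, (T.filter fun E => ¬ E ≤ Hx x).card := by
          refine Finset.sum_congr rfl fun x _ => ?_
          rw [Finset.card_filter]
          exact Finset.sum_congr rfl fun E _ => if_congr (hHx E x) rfl rfl
  -- per-coordinate count for S
  have hcnt1 : ∀ x ∈ supC, (S.filter fun E => ¬ E ≤ Hx x).card
      * (Fintype.card F ^ (i-1) * (Fintype.card F - 1))
      = NN * (Fintype.card F ^ (k-1) * (Fintype.card F - 1)) := by
    intro x hx
    have hHrk := hrkCHx x hx
    have hfilter_eq : S.filter (fun E => ¬ E ≤ Hx x)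
        = univ.filter (fun E : Submodule F (Fin n → F) =>
            E ≤ C ∧ finrank F E = i ∧ ¬ E ≤ C ⊓ Hx x) := by
      rw [hSdef, Finset.filter_filter]
      apply Finset.filter_congr
      intro E _
      simp only [le_inf_iff]
      tauto
    rw [hfilter_eq, ← natCard_eq_filter,
      hyperplane_count' C (C ⊓ Hx x) inf_le_left (by omega) hi1,
      card_le_and_finrank,
      nSub_congr' (F := F) (W := ↥(C ⊓ Hx x)) (W' := Fin (k-1) → F)
        (by rw [hfrfun]; omega) (i-1), ← hNNdef]
    have hfr : finrank F (C ⊓ Hx x : Submodule F (Fin n → F)) = k - 1 := by omega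
    rw [hfr]
  have hW : (∑ E ∈ S, codeWt E) * (Fintype.card F ^ (i-1) * (Fintype.card F - 1))
      = dk * (NN * (Fintype.card F ^ (k-1) * (Fintype.card F - 1))) := by
    rw [hdouble S (fun E hE => (mem_filter.1 hE).2.1), Finset.sum_mul,
      Finset.sum_congr rfl hcnt1, Finset.sum_const, smul_eq_mul, hsupC_card]
  -- number of i-dim subcodes containing a fixed nonzero codeword
  have hMv : ∀ v : Fin n → F, v ∈ C → v ≠ 0 → (S.filter fun E => v ∈ E).card = NN := by
    intro v hvC hv0
    have hfeq : S.filter (fun E => v ∈ E) = univ.filter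
        (fun E : Submodule F (Fin n → F) => E ≤ C ∧ v ∈ E ∧ finrank F E = i) := by
      rw [hSdef, Finset.filter_filter]
      apply Finset.filter_congr
      intro E _
      tauto
    rw [hfeq, ← natCard_eq_filter,
      card_line_fun C hvC hv0 hi1 (by omega : finrank F C = (k-1) + 1), hNNdef]
  set VC := univ.filter (fun v : Fin n → F => v ∈ C ∧ v ≠ 0) with hVCdef
  have hVC_card : VC.card = Fintype.card F ^ k - 1 := by
    rw [hVCdef, ← natCard_eq_filter, card_nonzero' C, hk]
  -- line-count identity
  have hNS : S.card * (Fintype.card F ^ i - 1) = (Fintype.card F ^ k - 1) * NN := by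
    have h1 : ∑ E ∈ S, (univ.filter fun v : Fin n → F => v ∈ E ∧ v ≠ 0).card
        = ∑ v ∈ VC, (S.filter fun E => v ∈ E).card := by
      calc ∑ E ∈ S, (univ.filter fun v : Fin n → F => v ∈ E ∧ v ≠ 0).card
          = ∑ E ∈ S, ∑ v : Fin n → F, if v ∈ E ∧ v ≠ 0 then 1 else 0 := by
            refine Finset.sum_congr rfl fun E _ => ?_
            rw [Finset.card_filter]
        _ = ∑ v : Fin n → F, ∑ E ∈ S, if v ∈ E ∧ v ≠ 0 then 1 else 0 := Finset.sum_comm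
        _ = ∑ v ∈ VC, ∑ E ∈ S, if v ∈ E ∧ v ≠ 0 then 1 else 0 := by
            symm
            apply Finset.sum_subset (subset_univ _)
            intro v _ hv
            refine Finset.sum_eq_zero fun E hE => ?_
            rw [if_neg]
            rintro ⟨hvE, hv0⟩
            exact hv (mem_filter.2 ⟨mem_univ _, (mem_filter.1 hE).2.1 hvE, hv0⟩)
        _ = ∑ v ∈ VC, (S.filter fun E => v ∈ E).card := by
            refine Finset.sum_congr rfl fun v hv => ?_
            rw [Finset.card_filter]
            exact Finset.sum_congr rfl fun E _ =>
              if_congr (and_iff_left (mem_filter.1 hv).2.2) rfl rfl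
    have h3 : ∑ E ∈ S, (univ.filter fun v : Fin n → F => v ∈ E ∧ v ≠ 0).card
        = S.card * (Fintype.card F ^ i - 1) := by
      refine Finset.sum_const_nat fun E hE => ?_
      rw [← natCard_eq_filter, card_nonzero' E, (mem_filter.1 hE).2.2]
    have h4 : ∑ v ∈ VC, (S.filter fun E => v ∈ E).card
        = (Fintype.card F ^ k - 1) * NN := by
      rw [Finset.sum_const_nat fun v hv =>
        hMv v (mem_filter.1 hv).2.1 (mem_filter.1 hv).2.2, hVC_card]
    rw [← h3, h1, h4]
  -- all i-dimensional subcodes have weight exactly d_i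
  have hWS : ∑ E ∈ S, codeWt E = S.card * di := by
    have hpow : Fintype.card F ^ (k-i) * Fintype.card F ^ (i-1)
        = Fintype.card F ^ (k-1) := by
      rw [← pow_add]
      congr 1
      omega
    have hX : 0 < (Fintype.card F ^ (i-1) * (Fintype.card F - 1))
        * (Fintype.card F ^ k - 1) := by
      have h5 : 0 < Fintype.card F ^ (i-1) := Nat.pow_pos (by omega)
      exact Nat.mul_pos (Nat.mul_pos h5 (by omega)) (by omega)
    apply Nat.eq_of_mul_eq_mul_right hX
    calc (∑ E ∈ S, codeWt E)
          * ((Fintype.card F ^ (i-1) * (Fintype.card F - 1)) * (Fintype.card F ^ k - 1))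
        = ((∑ E ∈ S, codeWt E) * (Fintype.card F ^ (i-1) * (Fintype.card F - 1)))
          * (Fintype.card F ^ k - 1) := by ring
      _ = (dk * (NN * (Fintype.card F ^ (k-1) * (Fintype.card F - 1))))
          * (Fintype.card F ^ k - 1) := by rw [hW]
      _ = (dk * (NN * ((Fintype.card F ^ (k-i) * Fintype.card F ^ (i-1))
          * (Fintype.card F - 1)))) * (Fintype.card F ^ k - 1) := by rw [hpow]
      _ = Fintype.card F ^ (k-i) * ((Fintype.card F ^ k - 1) * NN)
          * (dk * (Fintype.card F ^ (i-1) * (Fintype.card F - 1))) := by ring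
      _ = Fintype.card F ^ (k-i) * (S.card * (Fintype.card F ^ i - 1))
          * (dk * (Fintype.card F ^ (i-1) * (Fintype.card F - 1))) := by rw [hNS]
      _ = S.card * (Fintype.card F ^ (k-i) * (Fintype.card F ^ i - 1) * dk)
          * (Fintype.card F ^ (i-1) * (Fintype.card F - 1)) := by ring
      _ = S.card * ((Fintype.card F ^ k - 1) * di)
          * (Fintype.card F ^ (i-1) * (Fintype.card F - 1)) := by rw [hrel]
      _ = (S.card * di) * ((Fintype.card F ^ (i-1) * (Fintype.card F - 1))
          * (Fintype.card F ^ k - 1)) := by ring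
  have hwtE : ∀ E ∈ S, codeWt E = di := by
    intro E hE
    by_contra hne
    have hlt : ∀ E' ∈ S, di ≤ codeWt E' := fun E' hE' =>
      hdi_le E' (mem_filter.1 hE').2.1 (mem_filter.1 hE').2.2
    have hstrict : ∑ E' ∈ S, di < ∑ E' ∈ S, codeWt E' :=
      Finset.sum_lt_sum hlt ⟨E, hE, lt_of_le_of_ne (hlt E hE) (Ne.symm hne)⟩
    rw [Finset.sum_const, smul_eq_mul, hWS] at hstrict
    omega
  -- per-codeword equation
  have hkey : ∀ c : Fin n → F, c ∈ C → c ≠ 0 →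
      NN * di + (dk - (univ.filter fun x : Fin n => c x ≠ 0).card) * PP = dk * NN
      ∧ (univ.filter fun x : Fin n => c x ≠ 0).card ≤ dk := by
    intro c hcC hc0
    have hsupc_sub : (univ.filter fun x : Fin n => c x ≠ 0) ⊆ supC := by
      intro x hxmem
      exact mem_filter.2 ⟨mem_univ _, ⟨c, hcC, (mem_filter.1 hxmem).2⟩⟩
    have hwcdk : (univ.filter fun x : Fin n => c x ≠ 0).card ≤ dk := by
      have := Finset.card_le_card hsupc_sub
      omega
    have hScC : ∀ E ∈ S.filter (fun E => c ∈ E), E ≤ C := fun E hE =>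
      (mem_filter.1 (mem_filter.1 hE).1).2.1
    have hM : (S.filter (fun E => c ∈ E)).card = NN := hMv c hcC hc0
    have hsum1 : ∑ E ∈ S.filter (fun E => c ∈ E), codeWt E = NN * di := by
      rw [Finset.sum_const_nat (fun E hE => hwtE E (mem_filter.1 hE).1), hM]
    have hd2 := hdouble (S.filter (fun E => c ∈ E)) hScC
    have hsum2 : ∑ x ∈ supC, (((S.filter (fun E => c ∈ E)).filter
          fun E => E ≤ Hx x).card + ((S.filter (fun E => c ∈ E)).filter
          fun E => ¬ E ≤ Hx x).card) = dk * NN := by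
      rw [Finset.sum_const_nat (fun x _ =>
        Finset.card_filter_add_card_filter_not _), hsupC_card, hM]
    have hb0 : ∀ x ∈ (univ.filter fun x : Fin n => c x ≠ 0),
        ((S.filter (fun E => c ∈ E)).filter fun E => E ≤ Hx x).card = 0 := by
      intro x hxmem
      rw [Finset.card_eq_zero, Finset.filter_eq_empty_iff]
      intro E hE hle
      exact (mem_filter.1 hxmem).2 ((hmemHx c x).1 (hle (mem_filter.1 hE).2))
    have hbPP : ∀ x ∈ supC, x ∉ (univ.filter fun x : Fin n => c x ≠ 0) →
        ((S.filter (fun E => c ∈ E)).filter fun E => E ≤ Hx x).card = PP := by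
      intro x hxC hxc
      have hcx0 : c x = 0 := by
        by_contra h
        exact hxc (mem_filter.2 ⟨mem_univ _, h⟩)
      have hcCH : c ∈ C ⊓ Hx x := ⟨hcC, (hmemHx c x).2 hcx0⟩
      have hHrk := hrkCHx x hxC
      have hfeq : (S.filter (fun E => c ∈ E)).filter (fun E => E ≤ Hx x)
          = univ.filter (fun E : Submodule F (Fin n → F) =>
              E ≤ C ⊓ Hx x ∧ c ∈ E ∧ finrank F E = i) := by
        rw [hSdef, Finset.filter_filter, Finset.filter_filter]
        apply Finset.filter_congr
        intro E _
        simp only [le_inf_iff]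
        tauto
      rw [hfeq, ← natCard_eq_filter,
        card_line_fun (C ⊓ Hx x) hcCH hc0 hi1
          (by omega : finrank F (C ⊓ Hx x : Submodule F (Fin n → F)) = (k-2) + 1),
        hPPdef]
    have hbsum : ∑ x ∈ supC, ((S.filter (fun E => c ∈ E)).filter
        fun E => E ≤ Hx x).card
        = (dk - (univ.filter fun x : Fin n => c x ≠ 0).card) * PP := by
      rw [← Finset.sum_sdiff hsupc_sub,
        Finset.sum_const_nat (fun x hxmem =>
          hbPP x (mem_sdiff.1 hxmem).1 (mem_sdiff.1 hxmem).2),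
        Finset.sum_eq_zero hb0, Finset.card_sdiff_of_subset hsupc_sub, hsupC_card, add_zero]
    refine ⟨?_, hwcdk⟩
    have hax : ∑ x ∈ supC, ((S.filter (fun E => c ∈ E)).filter
        fun E => ¬ E ≤ Hx x).card = NN * di := by
      rw [← hd2, hsum1]
    rw [Finset.sum_add_distrib, hbsum, hax] at hsum2
    omega
  -- choose a base codeword
  have hCne : C ≠ ⊥ := by
    intro h
    rw [h, finrank_bot] at hk
    omega
  obtain ⟨c0, hc0C, hc00⟩ := (Submodule.ne_bot_iff C).1 hCne
  set d := (univ.filter fun x : Fin n => c0 x ≠ 0).card with hddef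
  have hconst : ∀ c : Fin n → F, c ∈ C → c ≠ 0 →
      (univ.filter fun x : Fin n => c x ≠ 0).card = d := by
    intro c hcC hc0
    obtain ⟨h1, h2⟩ := hkey c hcC hc0
    obtain ⟨h3, h4⟩ := hkey c0 hc0C hc00
    rw [← hddef] at h3 h4
    have h5 : (dk - (univ.filter fun x : Fin n => c x ≠ 0).card) * PP
        = (dk - d) * PP := by omega
    have h6 := Nat.eq_of_mul_eq_mul_right hPPpos h5
    omega
  -- final identity
  have hfinal : d * (Fintype.card F ^ k - 1)
      = dk * (Fintype.card F ^ (k-1) * (Fintype.card F - 1)) := by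
    have h1 : ∑ c ∈ VC, (univ.filter fun x : Fin n => c x ≠ 0).card
        = ∑ x ∈ supC, (VC.filter fun c => c x ≠ 0).card := by
      calc ∑ c ∈ VC, (univ.filter fun x : Fin n => c x ≠ 0).card
          = ∑ c ∈ VC, ∑ x : Fin n, if c x ≠ 0 then 1 else 0 := by
            refine Finset.sum_congr rfl fun c _ => ?_
            rw [Finset.card_filter]
        _ = ∑ x : Fin n, ∑ c ∈ VC, if c x ≠ 0 then 1 else 0 := Finset.sum_comm
        _ = ∑ x ∈ supC, ∑ c ∈ VC, if c x ≠ 0 then 1 else 0 := by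
            symm
            apply Finset.sum_subset (subset_univ _)
            intro x _ hx
            refine Finset.sum_eq_zero fun c hc => ?_
            rw [if_neg]
            intro hcx
            exact hx (mem_filter.2 ⟨mem_univ _, ⟨c, (mem_filter.1 hc).2.1, hcx⟩⟩)
        _ = ∑ x ∈ supC, (VC.filter fun c => c x ≠ 0).card := by
            refine Finset.sum_congr rfl fun x _ => ?_
            rw [Finset.card_filter]
    have h2 : ∑ c ∈ VC, (univ.filter fun x : Fin n => c x ≠ 0).card
        = (Fintype.card F ^ k - 1) * d := by
      rw [Finset.sum_const_nat (fun c hc =>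
        hconst c (mem_filter.1 hc).2.1 (mem_filter.1 hc).2.2), hVC_card]
    have h3 : ∀ x ∈ supC, (VC.filter fun c => c x ≠ 0).card
        = Fintype.card F ^ (k-1) * (Fintype.card F - 1) := by
      intro x hx
      have hHrk := hrkCHx x hx
      have hfeq : VC.filter (fun c => c x ≠ 0) = univ.filter
          (fun c : Fin n → F => c ∈ C ∧ c ∉ (C ⊓ Hx x : Submodule F (Fin n → F))) := by
        rw [hVCdef, Finset.filter_filter]
        apply Finset.filter_congr
        intro c _
        constructor
        · rintro ⟨⟨h1', h2'⟩, h3'⟩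
          exact ⟨h1', fun hm => h3' ((hmemHx c x).1 hm.2)⟩
        · rintro ⟨h1', h2'⟩
          have hcx : c x ≠ 0 := fun h0 => h2' ⟨h1', (hmemHx c x).2 h0⟩
          exact ⟨⟨h1', fun h0 => hcx (by rw [h0]; rfl)⟩, hcx⟩
      have hrk' : finrank F (C ⊓ Hx x : Submodule F (Fin n → F)) + 1 = finrank F C := by
        clear h1 h2
        omega
      have hfr : finrank F (C ⊓ Hx x : Submodule F (Fin n → F)) = k - 1 := by
        clear h1 h2
        omega
      rw [hfeq]
      rw [← natCard_eq_filter]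
      rw [card_mem_diff' C (C ⊓ Hx x) inf_le_left hrk']
      rw [hfr]
    have h4 : ∑ x ∈ supC, (VC.filter fun c => c x ≠ 0).card
        = dk * (Fintype.card F ^ (k-1) * (Fintype.card F - 1)) := by
      rw [Finset.sum_const_nat h3, hsupC_card]
    calc d * (Fintype.card F ^ k - 1) = (Fintype.card F ^ k - 1) * d := mul_comm _ _
      _ = ∑ c ∈ VC, (univ.filter fun x : Fin n => c x ≠ 0).card := h2.symm
      _ = ∑ x ∈ supC, (VC.filter fun c => c x ≠ 0).card := h1
      _ = dk * (Fintype.card F ^ (k-1) * (Fintype.card F - 1)) := h4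
  refine ⟨d, ?_, hfinal⟩
  intro c hcC hc0
  rw [← hconst c hcC hc0, ← Nat.card_coe_set_eq]
  exact natCard_eq_filter _
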